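/- Let S be a semigroup that is the disjoint union of free monogenic subsemigroups ⟨a⟩, ⟨b⟩, ⟨c⟩, and suppose ab = ba = a^i, ac = ca = a^j, bc = c², cb = b² for positive integers i, j. Then i = j. -/
import Mathlib


/-- `pw a n` is `a ^ n` for `n ≥ 1` (with junk value `a` at `n = 0`),
defined in any magma. -/
def pw {S : Type*} [Mul S] (a : S) : ℕ → S
  | 0 => a
  | 1 => a
  | n + 2 => pw a (n + 1) * a

/-- The monogenic subsemigroup `⟨a⟩ = {a^n : n ≥ 1}`. -/
def genSet {S : Type*} [Mul S] (a : S) : Set S := {x | ∃ n, 1 ≤ n ∧ pw a n = x}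

/-- `a` has infinite order: its positive powers are pairwise distinct,
i.e. `⟨a⟩` is free monogenic. -/
def InfOrder {S : Type*} [Mul S] (a : S) : Prop :=
  ∀ m n : ℕ, 1 ≤ m → 1 ≤ n → pw a m = pw a n → m = n

lemma pw_succ {S : Type*} [Mul S] (a : S) (n : ℕ) (hn : 1 ≤ n) :
    pw a (n + 1) = pw a n * a := by
  obtain ⟨m, rfl⟩ := Nat.exists_eq_add_of_le hn
  rw [show 1 + m = m + 1 by omega]
  rfl

lemma pw_add {S : Type*} [Semigroup S] (a : S) (m n : ℕ) (hm : 1 ≤ m) (hn : 1 ≤ n) :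
    pw a (m + n) = pw a m * pw a n := by
  induction n with
  | zero => omega
  | succ n ih =>
    rcases Nat.eq_or_lt_of_le hn with h | h
    · simp [← h, pw_succ a m hm, pw]
    · have hn1 : 1 ≤ n := by omega
      rw [show m + (n + 1) = (m + n) + 1 from rfl, pw_succ a (m + n) (by omega),
        ih hn1, pw_succ a n hn1, mul_assoc]

lemma pw_mul_aux {S : Type*} [Semigroup S] (a b : S) (i : ℕ) (hi : 1 ≤ i)
    (h1 : a * b = pw a i) (k : ℕ) (hk : 1 ≤ k) :
    pw a k * b = pw a (k - 1 + i) := by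
  rcases Nat.eq_or_lt_of_le hk with h | h
  · simpa [← h, pw] using h1
  · obtain ⟨m, rfl⟩ : ∃ m, k = m + 1 := ⟨k - 1, by omega⟩
    have hm : 1 ≤ m := by omega
    rw [pw_succ a m hm, mul_assoc, h1, ← pw_add a m i hm hi]
    congr 1

theorem stmt_14 {S : Type*} [Semigroup S] (a b c : S)
    (ha : InfOrder a) (hb : InfOrder b) (hc : InfOrder c)
    (hab : genSet a ∩ genSet b = ∅) (hac : genSet a ∩ genSet c = ∅)
    (hbc : genSet b ∩ genSet c = ∅)
    (hcover : genSet a ∪ genSet b ∪ genSet c = Set.univ)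
    (i j : ℕ) (hi : 1 ≤ i) (hj : 1 ≤ j)
    (h1 : a * b = pw a i) (h2 : b * a = pw a i)
    (h3 : a * c = pw a j) (h4 : c * a = pw a j)
    (h5 : b * c = pw c 2) (h6 : c * b = pw b 2) :
    i = j := by
  have key : pw a (i - 1 + i) = pw a (j - 1 + i) := by
    have e1 : a * (b * b) = pw a (i - 1 + i) := by
      rw [← mul_assoc, h1, pw_mul_aux a b i hi h1 i hi]
    have e2 : a * (b * b) = pw a (j - 1 + i) := by
      have : b * b = c * b := by rw [h6]; rfl
      rw [this, ← mul_assoc, h3, pw_mul_aux a b i hi h1 j hj]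
    rw [← e1, e2]
  have := ha _ _ (by omega) (by omega) key
  omega
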